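/- Let 𝔗₀ and 𝔗₁ be systems with run sets Π₀ and Π₁. If 𝔗₀ ∼_{Cμ} 𝔗₁, then for each run π₀ ∈ Π₀ there exists a run π₁ ∈ Π₁ such that the pair (π₀, π₁) is locally synchronous, and symmetrically for each run of 𝔗₁ there is a locally synchronous run of 𝔗₀. -/

import Mathlib

namespace TC

/-- A labelled transition: source state, label, target state. -/
structure Tr (S L : Type) where
  src : S
  lbl : L
  tgt : S

/-- A system (pre-TSI): initial state, set of transitions, independence relation. -/
structure Sys (S L : Type) where
  init : S
  T : Set (Tr S L)
  I : Tr S L → Tr S L → Prop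

/-- Processes of the stateless maximal process space: a support set together
with a transition of `𝔄 = T ∪ {t_ε}` (`none` is the empty transition `t_ε`). -/
abbrev Proc (S L : Type) := Set (Tr S L) × Option (Tr S L)

namespace Sys

variable {S L : Type} (𝔗 : Sys S L)

/-- `≺` : two transitions are instances of the same action in two different interleavings. -/
def Prec (t u : Tr S L) : Prop :=
  t.lbl = u.lbl ∧ ∃ b, 𝔗.I t ⟨t.src, b, u.src⟩ ∧ 𝔗.I t ⟨t.tgt, b, u.tgt⟩ ∧
    𝔗.I ⟨t.src, b, u.src⟩ u

/-- `∼` : the least equivalence relation containing `≺`. -/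
def Sim : Tr S L → Tr S L → Prop := Relation.EqvGen 𝔗.Prec

/-- `t ⊗ t'` : immediately concurrent transitions. -/
def Conc (t t' : Tr S L) : Prop := t.src = t'.src ∧ 𝔗.I t t'

/-- `t # t'` : transitions in conflict. -/
def Confl (t t' : Tr S L) : Prop := t.src = t'.src ∧ ¬ 𝔗.I t t'

/-- `t ⊖ t'` : linearly concurrent transitions. -/
def Lin (t t' : Tr S L) : Prop := t.tgt = t'.src ∧ 𝔗.I t t'

/-- `t ≤ t'` : causally dependent transitions. -/
def Caus (t t' : Tr S L) : Prop := t.tgt = t'.src ∧ ¬ 𝔗.I t t'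

/-- `≤` lifted to `𝔄 = T ∪ {t_ε}`: the empty transition `t_ε` (i.e. `none`)
satisfies `t_ε ≤ r` for every transition `r` with source `s₀`. -/
def CausA : Option (Tr S L) → Tr S L → Prop
  | none, r => r.src = 𝔗.init
  | some t, r => 𝔗.Caus t r

/-- `⊖` lifted to `𝔄 = T ∪ {t_ε}`. -/
def LinA : Option (Tr S L) → Tr S L → Prop
  | none, _ => False
  | some t, r => 𝔗.Lin t r

/-- `𝔛(s)` : the maximal set of transitions at state `s`. -/
def maxSet (s : S) : Set (Tr S L) := {t | t ∈ 𝔗.T ∧ t.src = s}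

/-- A conflict-free set of transitions: all with the same source and pairwise
immediately concurrent. -/
def ConflictFree (P : Set (Tr S L)) : Prop :=
  P ⊆ 𝔗.T ∧ (∃ s, ∀ t ∈ P, Tr.src t = s) ∧
    ∀ t ∈ P, ∀ t' ∈ P, t ≠ t' → 𝔗.Conc t t'

/-- A support set: a maximal set or a non-empty conflict-free set. -/
def IsSupport (R : Set (Tr S L)) : Prop :=
  (∃ s, R = 𝔗.maxSet s) ∨ (R.Nonempty ∧ 𝔗.ConflictFree R)

/-- `M ⊑ R` : `M` is a complete trace of `R`, i.e. a conflict-free support set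
`M ⊆ R` that cannot be enlarged inside `R` by a transition concurrent with all of `M`. -/
def CompleteTrace (M R : Set (Tr S L)) : Prop :=
  𝔗.IsSupport M ∧ 𝔗.ConflictFree M ∧ M ⊆ R ∧
    ¬ ∃ t ∈ R \ M, ∀ t' ∈ M, 𝔗.Conc t t'

/-- `𝒳` : the set of maximal sets and maximal traces of `𝔗`. -/
def calX : Set (Set (Tr S L)) :=
  {R | (∃ s, R = 𝔗.maxSet s) ∨ ∃ s, 𝔗.CompleteTrace R (𝔗.maxSet s)}

/-- Membership in `𝔄 = T ∪ {t_ε}`. -/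
def memA : Option (Tr S L) → Prop
  | none => True
  | some t => t ∈ 𝔗.T

/-- The stateless maximal process space `𝔖 = 𝒳 × 𝔄`. -/
def Sspace : Set (Proc S L) := {p | p.1 ∈ 𝔗.calX ∧ 𝔗.memA p.2}

/-- The initial process `(𝔛(s₀), t_ε)`. -/
def initProc : Proc S L := (𝔗.maxSet 𝔗.init, none)

/-- The axioms making a system a transition system with independence. -/
structure IsTSI : Prop where
  I_dom : ∀ ⦃t t'⦄, 𝔗.I t t' → t ∈ 𝔗.T ∧ t' ∈ 𝔗.T
  I_irrefl : ∀ t, ¬ 𝔗.I t t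
  I_symm : ∀ ⦃t t'⦄, 𝔗.I t t' → 𝔗.I t' t
  A1 : ∀ ⦃t u⦄, 𝔗.Sim t u → t.src = u.src → t.lbl = u.lbl → t.tgt = u.tgt
  A2 : ∀ ⦃t u⦄, 𝔗.I t u → t.src = u.src →
        ∃ q, 𝔗.I t ⟨t.tgt, u.lbl, q⟩ ∧ 𝔗.I u ⟨u.tgt, t.lbl, q⟩
  A3 : ∀ ⦃t u⦄, 𝔗.I t u → t.tgt = u.src →
        ∃ s₂, 𝔗.I t ⟨t.src, u.lbl, s₂⟩ ∧ 𝔗.I ⟨t.src, u.lbl, s₂⟩ ⟨s₂, t.lbl, u.tgt⟩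
  A4 : ∀ ⦃t t₂⦄, 𝔗.Sim t t₂ → ∀ t', (𝔗.I t t' ↔ 𝔗.I t₂ t')

/-- Image-finiteness (finite branching). -/
def ImageFinite : Prop := ∀ s a, {t | t ∈ 𝔗.T ∧ t.src = s ∧ t.lbl = a}.Finite

/-- No auto-concurrency: independent transitions enabled at the same state
never carry the same label. -/
def NoAutoConc : Prop :=
  ∀ ⦃t t'⦄, t ∈ 𝔗.T → t' ∈ 𝔗.T → 𝔗.Conc t t' → t.lbl ≠ t'.lbl

end Sys

end TC
namespace TC

namespace Sys

variable {S L : Type} (𝔗 : Sys S L)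

/-- A sequence of composable transitions of `𝔗` from state `s`. -/
def IsRunFrom : S → List (Tr S L) → Prop
  | _, [] => True
  | s, t :: ts => t ∈ 𝔗.T ∧ t.src = s ∧ IsRunFrom t.tgt ts

/-- A run of `𝔗`: a finite sequence of composable transitions from `s₀`. -/
def IsRun (π : List (Tr S L)) : Prop := 𝔗.IsRunFrom 𝔗.init π

/-- The state reached after executing a run (the target of `ϱ(π)`,
or `s₀` for the empty run). -/
def endState (π : List (Tr S L)) : S :=
  match π.getLast? with
  | none => 𝔗.init
  | some t => t.tgt

/-- The last transition of the run is independent of `u`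
(false for the empty run). -/
def lastIndep (π : List (Tr S L)) (u : Tr S L) : Prop :=
  ∃ t, π.getLast? = some t ∧ 𝔗.I t u

/-- The causal dependency order on the event occurrences (positions) of a run,
induced by the independence relation: the reflexive-transitive closure of
"occurs earlier and is not independent". -/
def runOrder (π : List (Tr S L)) : Fin π.length → Fin π.length → Prop :=
  Relation.ReflTransGen (fun i j => i < j ∧ ¬ 𝔗.I (π.get i) (π.get j))

end Sys

/-- The (labelled) posets induced by two runs with the respective independence
relations are isomorphic. -/
def PosetIso {S₁ S₂ L : Type} (𝔗₁ : Sys S₁ L) (𝔗₂ : Sys S₂ L)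
    (π₁ : List (Tr S₁ L)) (π₂ : List (Tr S₂ L)) : Prop :=
  ∃ f : Fin π₁.length ≃ Fin π₂.length,
    (∀ i, (π₁.get i).lbl = (π₂.get (f i)).lbl) ∧
    ∀ i j, 𝔗₁.runOrder π₁ i j ↔ 𝔗₂.runOrder π₂ (f i) (f j)

/-- The pair of extended runs `(π₁·u, π₂·v)` is synchronous. -/
def SyncExt {S₁ S₂ L : Type} (𝔗₁ : Sys S₁ L) (𝔗₂ : Sys S₂ L)
    (π₁ : List (Tr S₁ L)) (π₂ : List (Tr S₂ L)) (u : Tr S₁ L) (v : Tr S₂ L) : Prop :=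
  (𝔗₁.lastIndep π₁ u ↔ 𝔗₂.lastIndep π₂ v) ∧
    PosetIso 𝔗₁ 𝔗₂ (π₁ ++ [u]) (π₂ ++ [v])

/-- A history-preserving (hp) bisimulation between `𝔗₁` and `𝔗₂`: a relation
on pairs of runs containing `(ε, ε)` such that any labelled extension of one
run is matched by an equally-labelled extension of the other keeping the pair
synchronous. -/
structure IsHPB {S₁ S₂ L : Type} (𝔗₁ : Sys S₁ L) (𝔗₂ : Sys S₂ L)
    (R : List (Tr S₁ L) → List (Tr S₂ L) → Prop) : Prop where
  base : R [] []
  runs : ∀ ⦃π₁ π₂⦄, R π₁ π₂ → 𝔗₁.IsRun π₁ ∧ 𝔗₂.IsRun π₂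
  fwd : ∀ ⦃π₁ π₂⦄, R π₁ π₂ → ∀ ⦃u⦄, u ∈ 𝔗₁.T → u.src = 𝔗₁.endState π₁ →
      ∃ v, v ∈ 𝔗₂.T ∧ v.src = 𝔗₂.endState π₂ ∧ v.lbl = u.lbl ∧
        SyncExt 𝔗₁ 𝔗₂ π₁ π₂ u v ∧ R (π₁ ++ [u]) (π₂ ++ [v])
  bwd : ∀ ⦃π₁ π₂⦄, R π₁ π₂ → ∀ ⦃v⦄, v ∈ 𝔗₂.T → v.src = 𝔗₂.endState π₂ →
      ∃ u, u ∈ 𝔗₁.T ∧ u.src = 𝔗₁.endState π₁ ∧ u.lbl = v.lbl ∧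
        SyncExt 𝔗₁ 𝔗₂ π₁ π₂ u v ∧ R (π₁ ++ [u]) (π₂ ++ [v])

/-- History-preserving bisimilarity `∼_hpb`. -/
def HPBisimilar {S₁ S₂ L : Type} (𝔗₁ : Sys S₁ L) (𝔗₂ : Sys S₂ L) : Prop :=
  ∃ R, IsHPB 𝔗₁ 𝔗₂ R

/-- Locally synchronous pairs of runs: `(ε,ε)` is locally synchronous, and
`(π₀·u, π₁·v)` is locally synchronous iff `(π₀,π₁)` is and
`(ϱ(π₀),u) ∈ I₀ ⟺ (ϱ(π₁),v) ∈ I₁`. -/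
inductive LocSync {S₁ S₂ L : Type} (𝔗₁ : Sys S₁ L) (𝔗₂ : Sys S₂ L) :
    List (Tr S₁ L) → List (Tr S₂ L) → Prop
  | nil : LocSync 𝔗₁ 𝔗₂ [] []
  | snoc {π₁ π₂ u v} : LocSync 𝔗₁ 𝔗₂ π₁ π₂ →
      (𝔗₁.lastIndep π₁ u ↔ 𝔗₂.lastIndep π₂ v) →
      LocSync 𝔗₁ 𝔗₂ (π₁ ++ [u]) (π₂ ++ [v])

end TC
namespace TC

/-- Formulae of the causal modal mu-calculus `Cμ`
(the `⟨⊗⟩`-free fragment of TFL). -/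
inductive Cmu (L : Type) where
  | tt : Cmu L
  | var : ℕ → Cmu L
  | neg : Cmu L → Cmu L
  | and : Cmu L → Cmu L → Cmu L
  | diaC : L → Cmu L → Cmu L
  | diaNC : L → Cmu L → Cmu L
  | mu : ℕ → Cmu L → Cmu L

/-- Processes for `Cμ`: pairs `(s, t)` of a state and the incoming transition
(`none` is the empty transition `t_ε`, at `s₀`). -/
def Sys.CSpace {S L : Type} (𝔗 : Sys S L) : Set (S × Option (Tr S L)) :=
  {p | match p.2 with
    | none => p.1 = 𝔗.init
    | some t => t ∈ 𝔗.T ∧ t.tgt = p.1}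

namespace Cmu

variable {S L : Type}

/-- Denotation of `Cμ` formulae over pairs of a state
and its incoming transition. -/
def denot (𝔗 : Sys S L) (V : ℕ → Set (S × Option (Tr S L))) :
    Cmu L → Set (S × Option (Tr S L))
  | .tt => 𝔗.CSpace
  | .var n => V n
  | .neg φ => 𝔗.CSpace \ denot 𝔗 V φ
  | .and φ ψ => denot 𝔗 V φ ∩ denot 𝔗 V ψ
  | .diaC a φ => {p | p ∈ 𝔗.CSpace ∧ ∃ r ∈ 𝔗.T, r.src = p.1 ∧ r.lbl = a ∧
      𝔗.CausA p.2 r ∧ (r.tgt, some r) ∈ denot 𝔗 V φ}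
  | .diaNC a φ => {p | p ∈ 𝔗.CSpace ∧ ∃ r ∈ 𝔗.T, r.src = p.1 ∧ r.lbl = a ∧
      𝔗.LinA p.2 r ∧ (r.tgt, some r) ∈ denot 𝔗 V φ}
  | .mu n φ => ⋂₀ {Q | Q ⊆ 𝔗.CSpace ∧ denot 𝔗 (Function.update V n Q) φ ⊆ Q}

/-- Free variables of a `Cμ` formula. -/
def FV : Cmu L → Set ℕ
  | .tt => ∅
  | .var n => {n}
  | .neg φ => FV φ
  | .and φ ψ => FV φ ∪ FV ψ
  | .diaC _ φ => FV φ
  | .diaNC _ φ => FV φ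
  | .mu n φ => FV φ \ {n}

/-- Fixpoint-free `Cμ` formulae. -/
def FpFree : Cmu L → Prop
  | .tt => True
  | .var _ => True
  | .neg φ => FpFree φ
  | .and φ ψ => FpFree φ ∧ FpFree ψ
  | .diaC _ φ => FpFree φ
  | .diaNC _ φ => FpFree φ
  | .mu _ _ => False

end Cmu

/-- `Cμ`-equivalence: the initial processes `(s₀, t_ε)` satisfy the same
fixpoint-free closed `Cμ` formulae. -/
def CmuEquiv {S₁ S₂ L : Type} (𝔗₁ : Sys S₁ L) (𝔗₂ : Sys S₂ L) : Prop :=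
  ∀ φ : Cmu L, φ.FpFree → φ.FV = ∅ →
    (((𝔗₁.init, none) : S₁ × Option (Tr S₁ L)) ∈ Cmu.denot 𝔗₁ (fun _ => ∅) φ ↔
     ((𝔗₂.init, none) : S₂ × Option (Tr S₂ L)) ∈ Cmu.denot 𝔗₂ (fun _ => ∅) φ)

end TC

namespace TC
namespace Aux

open Cmu

variable {S S₀ S₁ L : Type}

/-- Process equivalence: same fixpoint-free closed formulae. -/
def PEq (𝔗₀ : Sys S₀ L) (𝔗₁ : Sys S₁ L)
    (P : S₀ × Option (Tr S₀ L)) (Q : S₁ × Option (Tr S₁ L)) : Prop :=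
  ∀ φ : Cmu L, φ.FpFree → φ.FV = ∅ →
    (P ∈ Cmu.denot 𝔗₀ (fun _ => ∅) φ ↔ Q ∈ Cmu.denot 𝔗₁ (fun _ => ∅) φ)

lemma cspace_some {𝔗 : Sys S L} {t : Tr S L} (h : t ∈ 𝔗.T) :
    ((t.tgt, some t) : S × Option (Tr S L)) ∈ 𝔗.CSpace :=
  show t ∈ 𝔗.T ∧ t.tgt = t.tgt from ⟨h, rfl⟩

/-- If non-equivalent processes in the space, there is a distinguishing formula
that holds at `P` and fails at `Q`. -/
lemma distinguish {𝔗₀ : Sys S₀ L} {𝔗₁ : Sys S₁ L} {P Q}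
    (hP : P ∈ 𝔗₀.CSpace) (h : ¬ PEq 𝔗₀ 𝔗₁ P Q) :
    ∃ φ : Cmu L, φ.FpFree ∧ φ.FV = ∅ ∧
      P ∈ Cmu.denot 𝔗₀ (fun _ => ∅) φ ∧ Q ∉ Cmu.denot 𝔗₁ (fun _ => ∅) φ := by
  unfold PEq at h
  push_neg at h
  obtain ⟨φ, h1, h2, hne⟩ := h
  rcases hne with ⟨hp, hq⟩ | ⟨hp, hq⟩
  · exact ⟨φ, h1, h2, hp, hq⟩
  · exact ⟨.neg φ, h1, h2, ⟨hP, hp⟩, fun hmem => hmem.2 hq⟩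

/-- Finite conjunction. -/
def conj (l : List (Cmu L)) : Cmu L := l.foldr .and .tt

lemma conj_fpFree {l : List (Cmu L)} (h : ∀ φ ∈ l, FpFree φ) : FpFree (conj l) := by
  induction l with
  | nil => trivial
  | cons a t ih =>
      exact ⟨h a (by simp), ih fun φ hφ => h φ (by simp [hφ])⟩

lemma conj_fv {l : List (Cmu L)} (h : ∀ φ ∈ l, FV φ = ∅) : FV (conj l) = ∅ := by
  induction l with
  | nil => rfl
  | cons a t ih =>
      show FV a ∪ FV (conj t) = ∅
      rw [h a (by simp), ih fun φ hφ => h φ (by simp [hφ])]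
      simp

lemma mem_denot_conj {𝔗 : Sys S L} {V} {p} (hp : p ∈ 𝔗.CSpace) (l : List (Cmu L)) :
    p ∈ Cmu.denot 𝔗 V (conj l) ↔ ∀ φ ∈ l, p ∈ Cmu.denot 𝔗 V φ := by
  induction l with
  | nil => simpa [conj, Cmu.denot] using hp
  | cons a t ih =>
      show p ∈ Cmu.denot 𝔗 V a ∩ Cmu.denot 𝔗 V (conj t) ↔ _
      simp only [Set.mem_inter_iff, ih, List.mem_cons]
      constructor
      · rintro ⟨h1, h2⟩ φ (rfl | hφ)
        · exact h1
        · exact h2 φ hφ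
      · intro h
        exact ⟨h a (Or.inl rfl), fun φ hφ => h φ (Or.inr hφ)⟩

/-- Mode-parametrized mark relation: `true` is causal, `false` is linear. -/
def mark (𝔗 : Sys S L) (c : Bool) : Option (Tr S L) → Tr S L → Prop :=
  if c then 𝔗.CausA else 𝔗.LinA

/-- Mode-parametrized diamond. -/
def dia (c : Bool) : L → Cmu L → Cmu L :=
  if c then .diaC else .diaNC

lemma dia_fpFree (c : Bool) (a : L) {φ : Cmu L} (h : FpFree φ) : FpFree (dia c a φ) := by
  cases c <;> exact h

lemma dia_fv (c : Bool) (a : L) (φ : Cmu L) : FV (dia c a φ) = FV φ := by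
  cases c <;> rfl

lemma mem_denot_dia {𝔗 : Sys S L} {V} {p} (c : Bool) (a : L) (φ : Cmu L) :
    p ∈ Cmu.denot 𝔗 V (dia c a φ) ↔
      p ∈ 𝔗.CSpace ∧ ∃ r ∈ 𝔗.T, r.src = p.1 ∧ r.lbl = a ∧
        mark 𝔗 c p.2 r ∧ (r.tgt, some r) ∈ Cmu.denot 𝔗 V φ := by
  cases c <;> rfl

/-- The Hennessy–Milner argument. -/
lemma hm {𝔗₀ : Sys S₀ L} {𝔗₁ : Sys S₁ L} (hf₁ : 𝔗₁.ImageFinite)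
    {P Q} (hP : P ∈ 𝔗₀.CSpace) (hQ : Q ∈ 𝔗₁.CSpace) (hpq : PEq 𝔗₀ 𝔗₁ P Q)
    (c : Bool) {r} (hr : r ∈ 𝔗₀.T) (hsrc : r.src = P.1) (hmk : mark 𝔗₀ c P.2 r) :
    ∃ v ∈ 𝔗₁.T, v.src = Q.1 ∧ v.lbl = r.lbl ∧ mark 𝔗₁ c Q.2 v ∧
      PEq 𝔗₀ 𝔗₁ (r.tgt, some r) (v.tgt, some v) := by
  by_contra hcon
  push_neg at hcon
  set C : Set (Tr S₁ L) :=
    {v | v ∈ 𝔗₁.T ∧ v.src = Q.1 ∧ v.lbl = r.lbl ∧ mark 𝔗₁ c Q.2 v} with hC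
  have hCfin : C.Finite := by
    apply (hf₁ Q.1 r.lbl).subset
    rintro v ⟨h1, h2, h3, _⟩
    exact ⟨h1, h2, h3⟩
  set Cf := hCfin.toFinset with hCf
  have hx : ∀ v ∈ Cf, ∃ φ : Cmu L, φ.FpFree ∧ φ.FV = ∅ ∧
      (r.tgt, some r) ∈ Cmu.denot 𝔗₀ (fun _ => ∅) φ ∧
      (v.tgt, some v) ∉ Cmu.denot 𝔗₁ (fun _ => ∅) φ := by
    intro v hv
    rw [hCf, Set.Finite.mem_toFinset] at hv
    obtain ⟨h1, h2, h3, h4⟩ := hv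
    exact distinguish (cspace_some hr) (hcon v h1 h2 h3 h4)
  choose f hf1 hf2 hf3 hf4 using hx
  set l : List (Cmu L) := Cf.attach.toList.map (fun x => f x.1 x.2) with hl
  have hmem_l : ∀ φ ∈ l, ∃ (v : Tr S₁ L) (hv : v ∈ Cf), f v hv = φ := by
    intro φ hφ
    rw [hl, List.mem_map] at hφ
    obtain ⟨x, _, hx2⟩ := hφ
    exact ⟨x.1, x.2, hx2⟩
  have hΦfp : FpFree (conj l) := by
    apply conj_fpFree
    intro φ hφ
    obtain ⟨v, hv, rfl⟩ := hmem_l φ hφ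
    exact hf1 v hv
  have hΦfv : FV (conj l) = ∅ := by
    apply conj_fv
    intro φ hφ
    obtain ⟨v, hv, rfl⟩ := hmem_l φ hφ
    exact hf2 v hv
  have hPdia : P ∈ Cmu.denot 𝔗₀ (fun _ => ∅) (dia c r.lbl (conj l)) := by
    rw [mem_denot_dia]
    refine ⟨hP, r, hr, hsrc, rfl, hmk, ?_⟩
    rw [mem_denot_conj (cspace_some hr)]
    intro φ hφ
    obtain ⟨v, hv, rfl⟩ := hmem_l φ hφ
    exact hf3 v hv
  have hQdia : Q ∈ Cmu.denot 𝔗₁ (fun _ => ∅) (dia c r.lbl (conj l)) :=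
    (hpq _ (dia_fpFree c _ hΦfp) (by rw [dia_fv]; exact hΦfv)).mp hPdia
  rw [mem_denot_dia] at hQdia
  obtain ⟨_, v, hv1, hv2, hv3, hv4, hv5⟩ := hQdia
  have hvC : v ∈ Cf := by
    rw [hCf, Set.Finite.mem_toFinset]
    exact ⟨hv1, hv2, hv3, hv4⟩
  have : (v.tgt, some v) ∈ Cmu.denot 𝔗₁ (fun _ => ∅) (f v hvC) := by
    rw [mem_denot_conj (cspace_some hv1)] at hv5
    exact hv5 _ (by
      rw [hl, List.mem_map]
      exact ⟨⟨v, hvC⟩, Finset.mem_toList.2 (Finset.mem_attach _ _), rfl⟩)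
  exact hf4 v hvC this

/-! ### Run helpers -/

/-- The end state of a sequence of transitions started at `s`. -/
def efrom (𝔗 : Sys S L) : S → List (Tr S L) → S
  | s, [] => s
  | _, t :: ts => efrom 𝔗 t.tgt ts

lemma isRunFrom_snoc (𝔗 : Sys S L) (u : Tr S L) :
    ∀ (xs : List (Tr S L)) (s : S),
      𝔗.IsRunFrom s (xs ++ [u]) ↔
        𝔗.IsRunFrom s xs ∧ u ∈ 𝔗.T ∧ u.src = efrom 𝔗 s xs := by
  intro xs
  induction xs with
  | nil =>
      intro s
      show (u ∈ 𝔗.T ∧ u.src = s ∧ True) ↔ (True ∧ u ∈ 𝔗.T ∧ u.src = s)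
      tauto
  | cons t ts ih =>
      intro s
      show (t ∈ 𝔗.T ∧ t.src = s ∧ 𝔗.IsRunFrom t.tgt (ts ++ [u])) ↔
        ((t ∈ 𝔗.T ∧ t.src = s ∧ 𝔗.IsRunFrom t.tgt ts) ∧ u ∈ 𝔗.T ∧
          u.src = efrom 𝔗 t.tgt ts)
      rw [ih t.tgt]
      tauto

lemma efrom_eq (𝔗 : Sys S L) :
    ∀ (xs : List (Tr S L)) (s : S),
      efrom 𝔗 s xs = (match xs.getLast? with | none => s | some t => t.tgt) := by
  intro xs
  induction xs with
  | nil => intro s; rfl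
  | cons t ts ih =>
      intro s
      show efrom 𝔗 t.tgt ts = _
      rw [ih t.tgt]
      cases ts with
      | nil => rfl
      | cons a b =>
          rw [List.getLast?_cons_cons]
          rcases e : (a :: b).getLast? with _ | x
          · rw [List.getLast?_eq_none_iff] at e
            cases e
          · rfl

lemma endState_eq (𝔗 : Sys S L) (xs : List (Tr S L)) :
    𝔗.endState xs = efrom 𝔗 𝔗.init xs := by
  rw [efrom_eq]; rfl

lemma isRun_snoc (𝔗 : Sys S L) (xs : List (Tr S L)) (u : Tr S L) :
    𝔗.IsRun (xs ++ [u]) ↔ 𝔗.IsRun xs ∧ u ∈ 𝔗.T ∧ u.src = 𝔗.endState xs := by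
  rw [Sys.IsRun, Sys.IsRun, isRunFrom_snoc, endState_eq]

lemma mem_T_of_run (𝔗 : Sys S L) :
    ∀ (xs : List (Tr S L)) (s : S), 𝔗.IsRunFrom s xs → ∀ t ∈ xs, t ∈ 𝔗.T := by
  intro xs
  induction xs with
  | nil => intro s _ t ht; simp at ht
  | cons a b ih =>
      rintro s ⟨h1, _, h3⟩ t ht
      rcases List.mem_cons.1 ht with rfl | ht
      · exact h1
      · exact ih a.tgt h3 t ht

lemma endState_none {𝔗 : Sys S L} {π : List (Tr S L)} (h : π.getLast? = none) :
    𝔗.endState π = 𝔗.init := by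
  unfold Sys.endState; rw [h]

lemma endState_some {𝔗 : Sys S L} {π : List (Tr S L)} {t} (h : π.getLast? = some t) :
    𝔗.endState π = t.tgt := by
  unfold Sys.endState; rw [h]

lemma run_proc_cspace {𝔗 : Sys S L} {π : List (Tr S L)} (h : 𝔗.IsRun π) :
    ((𝔗.endState π, π.getLast?) : S × Option (Tr S L)) ∈ 𝔗.CSpace := by
  rcases hlast : π.getLast? with _ | t
  · show 𝔗.endState π = 𝔗.init
    exact endState_none hlast
  · show t ∈ 𝔗.T ∧ t.tgt = 𝔗.endState π
    exact ⟨mem_T_of_run 𝔗 π 𝔗.init h t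
        (List.mem_of_mem_getLast? (Option.mem_def.mpr hlast)),
      (endState_some hlast).symm⟩

lemma endState_snoc (𝔗 : Sys S L) (xs : List (Tr S L)) (u : Tr S L) :
    𝔗.endState (xs ++ [u]) = u.tgt :=
  endState_some List.getLast?_concat

/-- The one-directional main lemma. -/
lemma forward {𝔗₀ : Sys S₀ L} {𝔗₁ : Sys S₁ L} (hf₁ : 𝔗₁.ImageFinite)
    (heq : CmuEquiv 𝔗₀ 𝔗₁) :
    ∀ π₀, 𝔗₀.IsRun π₀ → ∃ π₁, 𝔗₁.IsRun π₁ ∧ LocSync 𝔗₀ 𝔗₁ π₀ π₁ ∧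
      PEq 𝔗₀ 𝔗₁ (𝔗₀.endState π₀, π₀.getLast?) (𝔗₁.endState π₁, π₁.getLast?) := by
  intro π₀
  induction π₀ using List.reverseRecOn with
  | nil =>
      intro _
      exact ⟨[], trivial, LocSync.nil, heq⟩
  | append_singleton xs u ih =>
      intro hrun
      rw [isRun_snoc] at hrun
      obtain ⟨hxs, huT, husrc⟩ := hrun
      obtain ⟨π₁, hπ₁run, hsync, hpeq⟩ := ih hxs
      have hP : ((𝔗₀.endState xs, xs.getLast?) : S₀ × Option (Tr S₀ L)) ∈ 𝔗₀.CSpace :=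
        run_proc_cspace hxs
      have hQ : ((𝔗₁.endState π₁, π₁.getLast?) : S₁ × Option (Tr S₁ L)) ∈ 𝔗₁.CSpace :=
        run_proc_cspace hπ₁run
      rcases hlast : xs.getLast? with _ | t₀
      · -- empty last: causal mode, lastIndep both false
        have hmk : mark 𝔗₀ true (𝔗₀.endState xs, xs.getLast?).2 u := by
          show 𝔗₀.CausA xs.getLast? u
          rw [hlast]
          show u.src = 𝔗₀.init
          rw [husrc, endState_none hlast]
        obtain ⟨v, hv1, hv2, hv3, hv4, hv5⟩ := hm hf₁ hP hQ hpeq true huT husrc hmk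
        refine ⟨π₁ ++ [v], ?_, ?_, ?_⟩
        · rw [isRun_snoc]; exact ⟨hπ₁run, hv1, hv2⟩
        · refine hsync.snoc ?_
          constructor
          · rintro ⟨t, ht, _⟩; rw [hlast] at ht; cases ht
          · rintro ⟨t₁, ht₁, hI⟩
            have hv4' : 𝔗₁.CausA π₁.getLast? v := hv4
            rw [ht₁] at hv4'
            exact absurd hI hv4'.2
        · rw [endState_snoc, List.getLast?_concat, endState_snoc, List.getLast?_concat]
          exact hv5
      · have htgt : t₀.tgt = 𝔗₀.endState xs := (endState_some hlast).symm
        by_cases hI : 𝔗₀.I t₀ u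
        · -- linear mode: lastIndep both true
          have hmk : mark 𝔗₀ false (𝔗₀.endState xs, xs.getLast?).2 u := by
            show 𝔗₀.LinA xs.getLast? u
            rw [hlast]
            exact ⟨htgt.trans husrc.symm, hI⟩
          obtain ⟨v, hv1, hv2, hv3, hv4, hv5⟩ := hm hf₁ hP hQ hpeq false huT husrc hmk
          have hv4' : 𝔗₁.LinA π₁.getLast? v := hv4
          rcases hl1 : π₁.getLast? with _ | t₁
          · rw [hl1] at hv4'; exact absurd hv4' not_false
          · rw [hl1] at hv4'
            refine ⟨π₁ ++ [v], ?_, ?_, ?_⟩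
            · rw [isRun_snoc]; exact ⟨hπ₁run, hv1, hv2⟩
            · exact hsync.snoc (iff_of_true ⟨t₀, hlast, hI⟩ ⟨t₁, hl1, hv4'.2⟩)
            · rw [endState_snoc, List.getLast?_concat, endState_snoc,
                List.getLast?_concat]
              exact hv5
        · -- causal mode: lastIndep both false
          have hmk : mark 𝔗₀ true (𝔗₀.endState xs, xs.getLast?).2 u := by
            show 𝔗₀.CausA xs.getLast? u
            rw [hlast]
            exact ⟨htgt.trans husrc.symm, hI⟩
          obtain ⟨v, hv1, hv2, hv3, hv4, hv5⟩ := hm hf₁ hP hQ hpeq true huT husrc hmk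
          have hv4' : 𝔗₁.CausA π₁.getLast? v := hv4
          refine ⟨π₁ ++ [v], ?_, ?_, ?_⟩
          · rw [isRun_snoc]; exact ⟨hπ₁run, hv1, hv2⟩
          · refine hsync.snoc ?_
            constructor
            · rintro ⟨t, ht, hIt⟩
              rw [hlast] at ht
              cases ht
              exact absurd hIt hI
            · rintro ⟨t₁, ht₁, hIt⟩
              rw [ht₁] at hv4'
              exact absurd hIt hv4'.2
          · rw [endState_snoc, List.getLast?_concat, endState_snoc,
              List.getLast?_concat]
            exact hv5

lemma locSync_symm {𝔗₀ : Sys S₀ L} {𝔗₁ : Sys S₁ L} :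
    ∀ {π₀ π₁}, LocSync 𝔗₀ 𝔗₁ π₀ π₁ → LocSync 𝔗₁ 𝔗₀ π₁ π₀ := by
  intro π₀ π₁ h
  induction h with
  | nil => exact LocSync.nil
  | snoc _ hiff ih => exact ih.snoc hiff.symm

end Aux
end TC

open TC in
/-- If `𝔗₀ ∼_{Cμ} 𝔗₁`, then for each run `π₀` of `𝔗₀` there is a
run `π₁` of `𝔗₁` such that `(π₀, π₁)` is locally synchronous, and symmetrically
for each run of `𝔗₁` there is a locally synchronous run of `𝔗₀`. -/
theorem cmu_equiv_runs_locally_synchronous {S₀ S₁ L : Type}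
    (𝔗₀ : Sys S₀ L) (𝔗₁ : Sys S₁ L)
    (h₀ : 𝔗₀.IsTSI) (h₁ : 𝔗₁.IsTSI)
    (hf₀ : 𝔗₀.ImageFinite) (hf₁ : 𝔗₁.ImageFinite)
    (ha₀ : 𝔗₀.NoAutoConc) (ha₁ : 𝔗₁.NoAutoConc)
    (heq : CmuEquiv 𝔗₀ 𝔗₁) :
    (∀ π₀, 𝔗₀.IsRun π₀ → ∃ π₁, 𝔗₁.IsRun π₁ ∧ LocSync 𝔗₀ 𝔗₁ π₀ π₁) ∧
    (∀ π₁, 𝔗₁.IsRun π₁ → ∃ π₀, 𝔗₀.IsRun π₀ ∧ LocSync 𝔗₀ 𝔗₁ π₀ π₁) := by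
  constructor
  · intro π₀ h
    obtain ⟨π₁, h1, h2, _⟩ := TC.Aux.forward hf₁ heq π₀ h
    exact ⟨π₁, h1, h2⟩
  · intro π₁ h
    have heq' : CmuEquiv 𝔗₁ 𝔗₀ := fun φ a b => (heq φ a b).symm
    obtain ⟨π₀, h1, h2, _⟩ := TC.Aux.forward hf₀ heq' π₁ h
    exact ⟨π₀, h1, TC.Aux.locSync_symm h2⟩
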